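/- The plane {m₂ = m₃ = 0} is invariant under the dynamics of the reduced two-body system: if (m₁,m₂,m₃,ξ,p) is a solution on [t₀, t*) with m₂(t₀) = 0 and m₃(t₀) = 0, then m₂(t) = 0, m₃(t) = 0 and m₁(t) = m₁(t₀) for every t ∈ [t₀, t*). -/

import Mathlib

open Filter Set


private lemma invariant_plane_aux (A C x y : ℝ) :
    |2 * A * (x ^ 2 - y ^ 2) - 4 * C * (x * y)| ≤ (2 * |A| + 2 * |C|) * (x ^ 2 + y ^ 2) := by
  have hA1 : 0 ≤ |A| + A := by nlinarith [neg_abs_le A]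
  have hA2 : 0 ≤ |A| - A := by nlinarith [le_abs_self A]
  have hC1 : 0 ≤ |C| + C := by nlinarith [neg_abs_le C]
  have hC2 : 0 ≤ |C| - C := by nlinarith [le_abs_self C]
  rw [abs_le]
  constructor <;>
    nlinarith [mul_nonneg hA1 (sq_nonneg x), mul_nonneg hA1 (sq_nonneg y),
      mul_nonneg hA2 (sq_nonneg x), mul_nonneg hA2 (sq_nonneg y),
      mul_nonneg hC1 (sq_nonneg (x + y)), mul_nonneg hC1 (sq_nonneg (x - y)),
      mul_nonneg hC2 (sq_nonneg (x + y)), mul_nonneg hC2 (sq_nonneg (x - y))]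

/-- The plane `{m₂ = m₃ = 0}` is invariant under the dynamics of the reduced two-body
system: a solution on `[t₀, t*)` (with `t* ∈ (t₀, ∞]`) starting with `m₂(t₀) = 0` and
`m₃(t₀) = 0` keeps `m₂ ≡ 0`, `m₃ ≡ 0`, and `m₁` constant. -/
theorem invariant_plane
    (t0 : ℝ) (tstar : EReal) (ht0 : (t0 : EReal) < tstar)
    (m1 m2 m3 xi p : ℝ → ℝ)
    (hm1 : ∀ t : ℝ, t0 ≤ t → (t : EReal) < tstar →
      HasDerivAt m1 (xi t * (-(m2 t)^2 + (m3 t)^2 + 2 * m2 t * m3 t * xi t)) t)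
    (hm2 : ∀ t : ℝ, t0 ≤ t → (t : EReal) < tstar →
      HasDerivAt m2 (m1 t * m2 t * xi t - m3 t * p t - 2 * m1 t * m3 t * (xi t)^2) t)
    (hm3 : ∀ t : ℝ, t0 ≤ t → (t : EReal) < tstar →
      HasDerivAt m3 (m2 t * p t - m1 t * m3 t * xi t) t)
    (hxi : ∀ t : ℝ, t0 ≤ t → (t : EReal) < tstar →
      HasDerivAt xi (-((xi t)^2 + 1) * (2 * p t - m1 t)) t)
    (hp : ∀ t : ℝ, t0 ≤ t → (t : EReal) < tstar →
      HasDerivAt p (-((xi t)^2 + 1) * (1 + m2 t * m3 t - 2 * (m3 t)^2 * xi t)) t)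
    (hm2init : m2 t0 = 0) (hm3init : m3 t0 = 0) :
    ∀ t : ℝ, t0 ≤ t → (t : EReal) < tstar →
      m2 t = 0 ∧ m3 t = 0 ∧ m1 t = m1 t0 := by
  intro t ht ht'
  have hmem : ∀ s ∈ Icc t0 t, t0 ≤ s ∧ (s : EReal) < tstar := by
    intro s hs
    refine ⟨hs.1, lt_of_le_of_lt ?_ ht'⟩
    exact_mod_cast hs.2
  have hc1 : ContinuousOn m1 (Icc t0 t) := fun s hs =>
    (hm1 s (hmem s hs).1 (hmem s hs).2).continuousAt.continuousWithinAt
  have hc2 : ContinuousOn m2 (Icc t0 t) := fun s hs =>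
    (hm2 s (hmem s hs).1 (hmem s hs).2).continuousAt.continuousWithinAt
  have hc3 : ContinuousOn m3 (Icc t0 t) := fun s hs =>
    (hm3 s (hmem s hs).1 (hmem s hs).2).continuousAt.continuousWithinAt
  have hcxi : ContinuousOn xi (Icc t0 t) := fun s hs =>
    (hxi s (hmem s hs).1 (hmem s hs).2).continuousAt.continuousWithinAt
  obtain ⟨K, hK⟩ : ∃ K, ∀ s ∈ Icc t0 t,
      2 * |m1 s * xi s| + 2 * |m1 s| * (xi s) ^ 2 ≤ K := by
    obtain ⟨C, hC⟩ := isCompact_Icc.exists_bound_of_continuousOn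
      (f := fun s => 2 * |m1 s * xi s| + 2 * |m1 s| * (xi s) ^ 2)
      ((continuousOn_const.mul (hc1.mul hcxi).abs).add
        ((continuousOn_const.mul hc1.abs).mul (hcxi.pow 2)))
    exact ⟨C, fun s hs => (le_abs_self _).trans (hC s hs)⟩
  set E : ℝ → ℝ := fun s => (m2 s) ^ 2 + (m3 s) ^ 2 with hEdef
  set E' : ℝ → ℝ := fun s =>
    2 * m2 s * (m1 s * m2 s * xi s - m3 s * p s - 2 * m1 s * m3 s * (xi s) ^ 2)
      + 2 * m3 s * (m2 s * p s - m1 s * m3 s * xi s) with hE'def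
  have hEder : ∀ s ∈ Ico t0 t, HasDerivAt E (E' s) s := by
    intro s hs
    have h1 := (hmem s (Ico_subset_Icc_self hs)).1
    have h2 := (hmem s (Ico_subset_Icc_self hs)).2
    have := ((hm2 s h1 h2).fun_pow 2).add ((hm3 s h1 h2).fun_pow 2)
    refine this.congr_deriv ?_
    simp only [hE'def]
    push_cast
    ring
  have key : ∀ s ∈ Icc t0 t, ‖E s‖ ≤ gronwallBound 0 K 0 (s - t0) := by
    apply norm_le_gronwallBound_of_norm_deriv_right_le
    · exact (hc2.pow 2).add (hc3.pow 2)
    · exact fun s hs => (hEder s hs).hasDerivWithinAt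
    · simp [hEdef, hm2init, hm3init]
    · intro s hs
      have hKs := hK s (Ico_subset_Icc_self hs)
      have hE0 : (0:ℝ) ≤ E s := by positivity
      have habs : |m1 s * (xi s) ^ 2| = |m1 s| * (xi s) ^ 2 := by
        rw [abs_mul, abs_of_nonneg (sq_nonneg (xi s))]
      have e : E' s = 2 * (m1 s * xi s) * ((m2 s) ^ 2 - (m3 s) ^ 2)
          - 4 * (m1 s * (xi s) ^ 2) * (m2 s * m3 s) := by
        simp only [hE'def]; ring
      rw [Real.norm_eq_abs, Real.norm_eq_abs, abs_of_nonneg hE0, add_zero, e]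
      refine (invariant_plane_aux _ _ _ _).trans ?_
      exact mul_le_mul_of_nonneg_right (by rw [habs]; linarith) hE0
  have hzero : ∀ s ∈ Icc t0 t, m2 s = 0 ∧ m3 s = 0 := by
    intro s hs
    have hk := key s hs
    rw [gronwallBound_ε0_δ0, Real.norm_eq_abs] at hk
    have h2 : m2 s ^ 2 + m3 s ^ 2 = 0 := le_antisymm ((le_abs_self _).trans hk) (by positivity)
    constructor <;> nlinarith [sq_nonneg (m2 s), sq_nonneg (m3 s)]
  have hm1const : ∀ s ∈ Icc t0 t, m1 s = m1 t0 := by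
    apply constant_of_has_deriv_right_zero hc1
    intro s hs
    have h1 := (hmem s (Ico_subset_Icc_self hs)).1
    have h2 := (hmem s (Ico_subset_Icc_self hs)).2
    have hd := hm1 s h1 h2
    rw [(hzero s (Ico_subset_Icc_self hs)).1, (hzero s (Ico_subset_Icc_self hs)).2] at hd
    simpa using hd.hasDerivWithinAt
  have htmem : t ∈ Icc t0 t := ⟨ht, le_refl t⟩
  exact ⟨(hzero t htmem).1, (hzero t htmem).2, hm1const t htmem⟩
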